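/- Let A be a unital C*-algebra and for each j ∈ ℤ and r ≥ 0 let f_j(·, r) : A → ℝ≥0 be a seminorm with f_j(1, r) = 0, f_j(a, r) ≤ ‖a‖, and f_j(ab, r) ≤ (3/2)(‖a‖ f_j(b,r) + ‖b‖ f_j(a,r)) for all a,b ∈ A. Let h : [0,1] → A be continuous with each h(t) anti-self-adjoint, f_0(h(t), r) ≤ f(r) for all t and some function f, and let U solve dU/ds = U h, U(0) = 1. Then for all s ∈ [0,1] and r ≥ 0, f_0(U(s), r) ≤ (3s/2) f(r) · exp((3/2)∫₀ˢ ‖h(t)‖ dt) ≤ (3/2) f(r) exp((3/2)‖h‖). -/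

import Mathlib

open MeasureTheory

/-- A seminorm bounded by the norm is continuous. -/
lemma seminorm_cont_aux {E : Type*} [NormedAddCommGroup E] [NormedSpace ℝ E]
    (p : Seminorm ℝ E) (hp : ∀ x, p x ≤ ‖x‖) : Continuous ⇑p := by
  rw [Metric.continuous_iff]
  intro x ε hε
  refine ⟨ε, hε, fun y hy => ?_⟩
  rw [Real.dist_eq, abs_sub_lt_iff]
  have h1 : p y - p x ≤ p (y - x) := by
    have := map_add_le_add p (y - x) x; simp only [sub_add_cancel] at this; linarith
  have h2 : p x - p y ≤ p (y - x) := by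
    have := map_add_le_add p (x - y) y
    simp only [sub_add_cancel] at this
    have hxy : p (x - y) = p (y - x) := by rw [← neg_sub, map_neg_eq_map]
    linarith
  have h3 : p (y - x) < ε := by
    refine lt_of_le_of_lt (hp _) ?_
    rw [← dist_eq_norm]; exact hy
  constructor <;> linarith
/-- Jensen's inequality for a continuous seminorm and an interval integral. -/
lemma seminorm_intervalIntegral_le {E : Type*} [NormedAddCommGroup E] [NormedSpace ℝ E]
    [CompleteSpace E]
    (p : Seminorm ℝ E) (hp : ∀ x, p x ≤ ‖x‖)
    {a b : ℝ} (hab : a ≤ b) {g : ℝ → E}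
    (hg : IntervalIntegrable g volume a b) :
    p (∫ t in a..b, g t) ≤ ∫ t in a..b, p (g t) := by
  have hpc : Continuous ⇑p := seminorm_cont_aux p hp
  rcases eq_or_lt_of_le hab with rfl | hlt
  · simp
  · rw [intervalIntegral.integral_of_le hab, intervalIntegral.integral_of_le hab]
    set μ := volume.restrict (Set.Ioc a b) with hμ
    have hfin : IsFiniteMeasure μ := by
      constructor
      rw [hμ, Measure.restrict_apply_univ, Real.volume_Ioc]
      exact ENNReal.ofReal_lt_top
    have hT : (μ Set.univ).toReal = b - a := by
      rw [hμ, Measure.restrict_apply_univ, Real.volume_Ioc,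
        ENNReal.toReal_ofReal (by linarith)]
    have hne : NeZero μ := by
      constructor
      intro h0
      have : (μ Set.univ).toReal = 0 := by rw [h0]; simp
      rw [hT] at this; linarith
    have hgi : Integrable g μ := hg.1
    have hpgi : Integrable (fun t => p (g t)) μ := by
      refine Integrable.mono' hgi.norm (hpc.comp_aestronglyMeasurable hgi.1) ?_
      filter_upwards with x
      rw [Real.norm_eq_abs, abs_of_nonneg (apply_nonneg p _)]
      exact hp _
    have hjen := (p.convexOn).map_average_le hpc.continuousOn isClosed_univ
      (Filter.Eventually.of_forall fun x => Set.mem_univ (g x)) hgi hpgi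
    have hint1 : ∫ t, g t ∂μ = (b - a) • ⨍ t, g t ∂μ := by
      rw [average_eq, measureReal_def, smul_smul, ← hT, mul_inv_cancel₀ (by rw [hT]; linarith), one_smul]
    calc p (∫ t, g t ∂μ) = (b - a) * p (⨍ t, g t ∂μ) := by
          rw [hint1, map_smul_eq_mul, Real.norm_eq_abs, abs_of_pos (by linarith)]
      _ ≤ (b - a) * ⨍ t, p (g t) ∂μ := mul_le_mul_of_nonneg_left hjen (by linarith)
      _ = ∫ t, p (g t) ∂μ := by
          rw [average_eq, measureReal_def, smul_eq_mul, ← mul_assoc, ← hT,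
            mul_inv_cancel₀ (by rw [hT]; linarith), one_mul]
/-- Integral form of Gronwall's inequality, tailored version. -/
lemma gronwall_aux (g k : ℝ → ℝ) (c : ℝ) (hc : 0 ≤ c)
    (hgc : ContinuousOn g (Set.Icc 0 1)) (hkc : ContinuousOn k (Set.Icc 0 1))
    (hk0 : ∀ t ∈ Set.Icc (0:ℝ) 1, 0 ≤ k t)
    (hineq : ∀ s ∈ Set.Icc (0:ℝ) 1, g s ≤ c * s + ∫ t in (0:ℝ)..s, k t * g t) :
    ∀ s ∈ Set.Icc (0:ℝ) 1, g s ≤ c * s * Real.exp (∫ t in (0:ℝ)..s, k t) := by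
  have huIcc : Set.uIcc (0:ℝ) 1 = Set.Icc 0 1 := Set.uIcc_of_le zero_le_one
  have hsubI : ∀ x ∈ Set.Icc (0:ℝ) 1, Set.uIcc (0:ℝ) x ⊆ Set.Icc 0 1 := by
    intro x hx
    rw [Set.uIcc_of_le hx.1]
    exact Set.Icc_subset_Icc le_rfl hx.2
  have hkgc : ContinuousOn (fun t => k t * g t) (Set.Icc 0 1) := hkc.mul hgc
  have hkint : ∀ x ∈ Set.Icc (0:ℝ) 1, IntervalIntegrable k volume 0 x := fun x hx =>
    (hkc.mono (hsubI x hx)).intervalIntegrable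
  have hkgint : ∀ x ∈ Set.Icc (0:ℝ) 1, IntervalIntegrable (fun t => k t * g t) volume 0 x :=
    fun x hx => (hkgc.mono (hsubI x hx)).intervalIntegrable
  set K : ℝ → ℝ := fun u => ∫ t in (0:ℝ)..u, k t with hK
  set R : ℝ → ℝ := fun u => ∫ t in (0:ℝ)..u, k t * g t with hR
  -- continuity of the primitives on Icc 0 1
  have hKc : ContinuousOn K (Set.Icc 0 1) := by
    rw [← huIcc]
    exact intervalIntegral.continuousOn_primitive_interval'
      (by rw [huIcc] at *; exact hkint 1 (by norm_num)) (by rw [huIcc]; norm_num)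
  have hRc : ContinuousOn R (Set.Icc 0 1) := by
    rw [← huIcc]
    exact intervalIntegral.continuousOn_primitive_interval'
      (by rw [huIcc] at *; exact hkgint 1 (by norm_num)) (by rw [huIcc]; norm_num)
  have hEc : ContinuousOn (fun u => Real.exp (-(K u))) (Set.Icc 0 1) :=
    Real.continuous_exp.comp_continuousOn hKc.neg
  set w : ℝ → ℝ := fun u => k u * (c * u) * Real.exp (-(K u)) with hw
  have hwc : ContinuousOn w (Set.Icc 0 1) := by
    exact (hkc.mul ((continuous_const.mul continuous_id).continuousOn)).mul hEc
  have hwint : ∀ x ∈ Set.Icc (0:ℝ) 1, IntervalIntegrable w volume 0 x := fun x hx =>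
    (hwc.mono (hsubI x hx)).intervalIntegrable
  -- derivatives at interior points
  have hKd : ∀ t ∈ Set.Ioo (0:ℝ) 1, HasDerivAt K (k t) t := by
    intro t ht
    exact intervalIntegral.integral_hasDerivAt_right (hkint t (Set.Ioo_subset_Icc_self ht))
      ((hkc.mono Set.Ioo_subset_Icc_self).stronglyMeasurableAtFilter isOpen_Ioo t ht)
      (hkc.continuousAt (Icc_mem_nhds ht.1 ht.2))
  have hRd : ∀ t ∈ Set.Ioo (0:ℝ) 1, HasDerivAt R (k t * g t) t := by
    intro t ht
    exact intervalIntegral.integral_hasDerivAt_right (hkgint t (Set.Ioo_subset_Icc_self ht))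
      ((hkgc.mono Set.Ioo_subset_Icc_self).stronglyMeasurableAtFilter isOpen_Ioo t ht)
      (hkgc.continuousAt (Icc_mem_nhds ht.1 ht.2))
  have hEd : ∀ t ∈ Set.Ioo (0:ℝ) 1,
      HasDerivAt (fun u => Real.exp (-(K u))) (-(k t * Real.exp (-(K t)))) t := by
    intro t ht
    have := ((hKd t ht).neg).exp
    refine (this : HasDerivAt (fun u => Real.exp (-(K u))) _ t).congr_deriv ?_
    show Real.exp (-(K t)) * -k t = -(k t * Real.exp (-(K t)))
    ring
  have hwd : ∀ t ∈ Set.Ioo (0:ℝ) 1, HasDerivAt (fun u => ∫ x in (0:ℝ)..u, w x) (w t) t := by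
    intro t ht
    exact intervalIntegral.integral_hasDerivAt_right (hwint t (Set.Ioo_subset_Icc_self ht))
      ((hwc.mono Set.Ioo_subset_Icc_self).stronglyMeasurableAtFilter isOpen_Ioo t ht)
      (hwc.continuousAt (Icc_mem_nhds ht.1 ht.2))
  set D : ℝ → ℝ := fun u => (∫ x in (0:ℝ)..u, w x) - Real.exp (-(K u)) * R u with hD
  have hDd : ∀ t ∈ Set.Ioo (0:ℝ) 1,
      HasDerivAt D (k t * Real.exp (-(K t)) * ((c * t + R t) - g t)) t := by
    intro t ht
    have h1 := (hwd t ht).sub ((hEd t ht).mul (hRd t ht))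
    refine (h1 : HasDerivAt D _ t).congr_deriv ?_
    simp only [hw]
    ring
  have hDc : ContinuousOn D (Set.Icc 0 1) := by
    refine ContinuousOn.sub ?_ (hEc.mul hRc)
    rw [← huIcc]
    exact intervalIntegral.continuousOn_primitive_interval'
      (by rw [huIcc] at *; exact hwint 1 (by norm_num)) (by rw [huIcc]; norm_num)
  have hDmono : MonotoneOn D (Set.Icc 0 1) := by
    apply monotoneOn_of_deriv_nonneg (convex_Icc 0 1) hDc
    · intro t ht
      rw [interior_Icc] at ht
      exact (hDd t ht).differentiableAt.differentiableWithinAt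
    · intro t ht
      rw [interior_Icc] at ht
      rw [(hDd t ht).deriv]
      have h1 : g t ≤ c * t + R t := hineq t (Set.Ioo_subset_Icc_self ht)
      have h2 : 0 ≤ k t := hk0 t (Set.Ioo_subset_Icc_self ht)
      have h3 := Real.exp_pos (-(K t))
      have := mul_nonneg (mul_nonneg h2 h3.le) (sub_nonneg.2 h1)
      linarith [this]
  intro s hs
  obtain ⟨hs0, hs1⟩ := hs
  have hD0 : D 0 = 0 := by
    simp [hD, hR, intervalIntegral.integral_same]
  have hDs : 0 ≤ D s := by
    rw [← hD0]
    exact hDmono (by constructor <;> norm_num) ⟨hs0, hs1⟩ hs0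
  -- so exp(-K s) * R s ≤ ∫ w
  have step1 : Real.exp (-(K s)) * R s ≤ ∫ x in (0:ℝ)..s, w x := by
    have : D s = (∫ x in (0:ℝ)..s, w x) - Real.exp (-(K s)) * R s := rfl
    linarith [hDs, this ▸ hDs]
  -- bound ∫ w by (c*s) * ∫ k * exp(-K)
  have step2 : (∫ x in (0:ℝ)..s, w x) ≤
      ∫ x in (0:ℝ)..s, (c * s) * (k x * Real.exp (-(K x))) := by
    apply intervalIntegral.integral_mono_on hs0 (hwint s ⟨hs0, hs1⟩)
    · apply ContinuousOn.intervalIntegrable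
      apply ContinuousOn.mono _ (hsubI s ⟨hs0, hs1⟩)
      exact continuous_const.continuousOn.mul (hkc.mul hEc)
    · intro x hx
      have hx1 : x ∈ Set.Icc (0:ℝ) 1 := ⟨hx.1, hx.2.trans hs1⟩
      have h2 : 0 ≤ k x := hk0 x hx1
      have h3 := Real.exp_pos (-(K x))
      have h4 : c * x ≤ c * s := mul_le_mul_of_nonneg_left hx.2 hc
      simp only [hw]
      nlinarith [mul_nonneg h2 h3.le]
  -- FTC: ∫ k exp(-K) = 1 - exp(-K s)
  have step3 : (∫ x in (0:ℝ)..s, k x * Real.exp (-(K x))) = 1 - Real.exp (-(K s)) := by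
    have hftc := intervalIntegral.integral_eq_sub_of_hasDeriv_right_of_le hs0
      (f := fun u => -Real.exp (-(K u)))
      (f' := fun u => k u * Real.exp (-(K u)))
      ((hEc.neg).mono (Set.Icc_subset_Icc le_rfl hs1))
      (fun x hx => by
        have hx1 : x ∈ Set.Ioo (0:ℝ) 1 := ⟨hx.1, lt_of_lt_of_le hx.2 hs1⟩
        have := ((hEd x hx1).neg).hasDerivWithinAt (s := Set.Ioi x)
        simpa [Pi.neg_def] using this)
      (((hkc.mul hEc).mono (hsubI s ⟨hs0, hs1⟩)).intervalIntegrable)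
    rw [hftc]
    have hK0 : K 0 = 0 := intervalIntegral.integral_same
    rw [hK0]
    simp
    ring
  have hKs0 : Real.exp (-(K s)) = (Real.exp (K s))⁻¹ := Real.exp_neg _
  have hX : 0 < Real.exp (K s) := Real.exp_pos _
  have step4 : (∫ x in (0:ℝ)..s, (c * s) * (k x * Real.exp (-(K x))))
      = (c * s) * (1 - Real.exp (-(K s))) := by
    rw [intervalIntegral.integral_const_mul, step3]
  have hER : Real.exp (-(K s)) * R s ≤ (c * s) * (1 - Real.exp (-(K s))) := by
    calc Real.exp (-(K s)) * R s ≤ ∫ x in (0:ℝ)..s, w x := step1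
      _ ≤ _ := step2
      _ = _ := step4
  have hRs : R s ≤ c * s * Real.exp (K s) - c * s := by
    rw [hKs0] at hER
    have h3 := mul_le_mul_of_nonneg_left hER hX.le
    rw [← mul_assoc, mul_inv_cancel₀ hX.ne', one_mul] at h3
    have h4 : Real.exp (K s) * (c * s * (1 - (Real.exp (K s))⁻¹))
        = c * s * Real.exp (K s) - c * s := by
      field_simp
    linarith [h4 ▸ h3]
  have := hineq s ⟨hs0, hs1⟩
  have hfin : g s ≤ c * s * Real.exp (K s) := by linarith
  exact hfin
/-- The solution of `U' = U h` with anti-self-adjoint `h` has norm one. -/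
lemma norm_U_eq_one_aux {A : Type*} [NormedRing A] [StarRing A] [CStarRing A]
    [NormedAlgebra ℂ A] [StarModule ℂ A] [CompleteSpace A] [Nontrivial A]
    (h : ℝ → A) (hanti : ∀ t ∈ Set.Icc (0:ℝ) 1, star (h t) = - h t)
    (U : ℝ → A) (hU0 : U 0 = 1)
    (hUode : ∀ s ∈ Set.Icc (0:ℝ) 1, HasDerivAt U (U s * h s) s) :
    ∀ s ∈ Set.Icc (0:ℝ) 1, ‖U s‖ = 1 := by
  have hW : ∀ s ∈ Set.Icc (0:ℝ) 1, U s * star (U s) = 1 := by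
    have key : ∀ x ∈ Set.Icc (0:ℝ) 1,
        HasDerivWithinAt (fun u => U u * star (U u)) ((fun _ => (0:A)) x) (Set.Icc 0 1) x := by
      intro x hx
      have h1 := hUode x hx
      have h2 : HasDerivAt (fun u => star (U u)) (star (U x * h x)) x := h1.star
      have h3 := h1.mul h2
      have h4 : U x * h x * star (U x) + U x * star (U x * h x) = 0 := by
        rw [star_mul, hanti x hx]
        simp [mul_assoc]
      rw [h4] at h3
      exact h3.hasDerivWithinAt
    intro s hs
    have hle := Convex.norm_image_sub_le_of_norm_hasDerivWithin_le (C := 0) key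
      (fun x _ => by simp) (convex_Icc 0 1) (⟨le_refl 0, zero_le_one⟩ : (0:ℝ) ∈ Set.Icc (0:ℝ) 1) hs
    simp only [zero_mul] at hle
    have : U s * star (U s) - U 0 * star (U 0) = 0 := by
      rw [← norm_le_zero_iff]
      exact hle
    have h5 : U 0 * star (U 0) = 1 := by rw [hU0, star_one, mul_one]
    rw [h5] at this
    exact sub_eq_zero.mp this
  intro s hs
  have h5 : ‖U s‖ * ‖U s‖ = 1 := by
    rw [← CStarRing.norm_self_mul_star, hW s hs, norm_one]
  rcases mul_self_eq_one_iff.mp h5 with h6 | h6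
  · exact h6
  · nlinarith [norm_nonneg (U s)]

/-- Localization bound for the unitary generated by a localized anti-self-adjoint
generator: if `F j (·, r)` is a family of seminorms with `F j 1 r = 0`,
`F j a r ≤ ‖a‖`, `F j (ab) r ≤ (3/2)(‖a‖ F j b r + ‖b‖ F j a r)`, the generator
h(t) satisfies `F 0 (h t) r ≤ f r`, and U solves dU/ds = U h with U 0 = 1, then
`F 0 (U s) r ≤ (3s/2) f r exp((3/2)∫₀ˢ ‖h‖) ≤ (3/2) f r exp((3/2) M)` where M
bounds `‖h t‖`. -/
theorem localization_of_generated_unitary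
    {A : Type*} [NormedRing A] [StarRing A] [CStarRing A]
    [NormedAlgebra ℂ A] [StarModule ℂ A] [CompleteSpace A]
    (F : ℤ → A → ℝ → ℝ)
    (hF_nonneg : ∀ j a r, 0 ≤ F j a r)
    (hF_add : ∀ j (a b : A) r, F j (a + b) r ≤ F j a r + F j b r)
    (hF_smul : ∀ j (c : ℂ) (a : A) r, F j (c • a) r = ‖c‖ * F j a r)
    (hF_one : ∀ j r, F j (1 : A) r = 0)
    (hF_norm : ∀ j a r, F j a r ≤ ‖a‖)
    (hF_mul : ∀ j (a b : A) r,
      F j (a * b) r ≤ (3/2) * (‖a‖ * F j b r + ‖b‖ * F j a r))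
    (h : ℝ → A) (hcont : ContinuousOn h (Set.Icc 0 1))
    (hanti : ∀ t ∈ Set.Icc (0:ℝ) 1, star (h t) = - h t)
    (f : ℝ → ℝ)
    (hloc : ∀ t ∈ Set.Icc (0:ℝ) 1, ∀ r ≥ (0:ℝ), F 0 (h t) r ≤ f r)
    (M : ℝ) (hM : ∀ t ∈ Set.Icc (0:ℝ) 1, ‖h t‖ ≤ M)
    (U : ℝ → A) (hU0 : U 0 = 1)
    (hUode : ∀ s ∈ Set.Icc (0:ℝ) 1, HasDerivAt U (U s * h s) s) :
    ∀ s ∈ Set.Icc (0:ℝ) 1, ∀ r ≥ (0:ℝ),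
      F 0 (U s) r ≤ (3 * s / 2) * f r *
          Real.exp ((3/2) * ∫ t in (0:ℝ)..s, ‖h t‖) ∧
      (3 * s / 2) * f r * Real.exp ((3/2) * ∫ t in (0:ℝ)..s, ‖h t‖)
        ≤ (3/2) * f r * Real.exp ((3/2) * M) := by
  intro s hs r hr
  obtain ⟨hs0, hs1⟩ := hs
  have hfr : 0 ≤ f r := le_trans (hF_nonneg 0 (h 0) r) (hloc 0 ⟨le_refl 0, zero_le_one⟩ r hr)
  have hM0 : 0 ≤ M := le_trans (norm_nonneg _) (hM 0 ⟨le_refl 0, zero_le_one⟩)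
  have hsubI : ∀ x ∈ Set.Icc (0:ℝ) 1, Set.uIcc (0:ℝ) x ⊆ Set.Icc 0 1 := by
    intro x hx; rw [Set.uIcc_of_le hx.1]; exact Set.Icc_subset_Icc le_rfl hx.2
  have hnormint : IntervalIntegrable (fun t => ‖h t‖) volume 0 s :=
    ((hcont.norm).mono (hsubI s ⟨hs0, hs1⟩)).intervalIntegrable
  constructor
  · -- main bound
    rcases subsingleton_or_nontrivial A with hA | hA
    · have hU : U s = (0:A) := Subsingleton.elim _ _
      have hle0 : F 0 (U s) r ≤ 0 := by
        calc F 0 (U s) r ≤ ‖U s‖ := hF_norm 0 (U s) r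
          _ = 0 := by rw [hU, norm_zero]
      refine le_trans hle0 ?_
      have h1 : (0:ℝ) ≤ 3 * s / 2 * f r := mul_nonneg (by linarith) hfr
      exact mul_nonneg h1 (Real.exp_pos _).le
    · have hnorm1 := norm_U_eq_one_aux h hanti U hU0 hUode
      have hUc : ContinuousOn U (Set.Icc 0 1) := fun x hx =>
        ((hUode x hx).continuousAt).continuousWithinAt
      have hUhc : ContinuousOn (fun t => U t * h t) (Set.Icc 0 1) := hUc.mul hcont
      set p : Seminorm ℝ A := Seminorm.of (fun a => F 0 a r)
        (fun a b => hF_add 0 a b r)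
        (fun c x => by
          show F 0 (c • x) r = ‖c‖ * F 0 x r
          rw [← Complex.coe_smul, hF_smul, Complex.norm_real]) with hp
      have hpeq : ∀ x : A, p x = F 0 x r := fun x => rfl
      have hple : ∀ x : A, p x ≤ ‖x‖ := fun x => hF_norm 0 x r
      have hpc := seminorm_cont_aux p hple
      have hgc : ContinuousOn (fun t => F 0 (U t) r) (Set.Icc 0 1) :=
        hpc.comp_continuousOn hUc
      have hfund : ∀ s' ∈ Set.Icc (0:ℝ) 1, U s' = 1 + ∫ t in (0:ℝ)..s', U t * h t := by
        intro s' hs'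
        have hint : IntervalIntegrable (fun t => U t * h t) volume 0 s' :=
          (hUhc.mono (hsubI s' hs')).intervalIntegrable
        have heq := intervalIntegral.integral_eq_sub_of_hasDerivAt (f := U)
          (f' := fun t => U t * h t)
          (fun x hx => hUode x ((hsubI s' hs') hx)) hint
        rw [heq, hU0]
        abel
      have hkey : ∀ s' ∈ Set.Icc (0:ℝ) 1, F 0 (U s') r ≤
          ((3/2) * f r) * s' + ∫ t in (0:ℝ)..s', ((3/2) * ‖h t‖) * (F 0 (U t) r) := by
        intro s' hs'
        have hintUh : IntervalIntegrable (fun t => U t * h t) volume 0 s' :=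
          (hUhc.mono (hsubI s' hs')).intervalIntegrable
        have h1 : F 0 (U s') r ≤ p (∫ t in (0:ℝ)..s', U t * h t) := by
          rw [hfund s' hs']
          calc F 0 (1 + ∫ t in (0:ℝ)..s', U t * h t) r
              ≤ F 0 (1:A) r + F 0 (∫ t in (0:ℝ)..s', U t * h t) r := hF_add 0 _ _ r
            _ = p (∫ t in (0:ℝ)..s', U t * h t) := by
                rw [hF_one 0 r, zero_add, hpeq]
        have h2 := seminorm_intervalIntegral_le p hple hs'.1 hintUh
        have h3 : (∫ t in (0:ℝ)..s', p (U t * h t)) ≤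
            ∫ t in (0:ℝ)..s', ((3/2) * f r + ((3/2) * ‖h t‖) * (F 0 (U t) r)) := by
          apply intervalIntegral.integral_mono_on hs'.1
          · exact ((hpc.comp_continuousOn hUhc).mono (hsubI s' hs')).intervalIntegrable
          · apply ContinuousOn.intervalIntegrable
            apply ContinuousOn.mono _ (hsubI s' hs')
            exact continuousOn_const.add ((continuousOn_const.mul hcont.norm).mul hgc)
          · intro t ht
            have ht1 : t ∈ Set.Icc (0:ℝ) 1 := ⟨ht.1, ht.2.trans hs'.2⟩
            have hm := hF_mul 0 (U t) (h t) r
            rw [hnorm1 t ht1, one_mul] at hm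
            have hl := hloc t ht1 r hr
            have hn := norm_nonneg (h t)
            rw [hpeq]
            nlinarith [hF_nonneg 0 (U t) r]
        have h4 : (∫ t in (0:ℝ)..s', ((3/2) * f r + ((3/2) * ‖h t‖) * (F 0 (U t) r)))
            = ((3/2) * f r) * s' + ∫ t in (0:ℝ)..s', ((3/2) * ‖h t‖) * (F 0 (U t) r) := by
          rw [intervalIntegral.integral_add (g := fun t => ((3/2) * ‖h t‖) * (F 0 (U t) r)) intervalIntegrable_const
            (((continuousOn_const.mul hcont.norm).mul hgc).mono
              (hsubI s' hs')).intervalIntegrable]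
          rw [intervalIntegral.integral_const, smul_eq_mul, sub_zero]
          ring
        rw [h4] at h3
        linarith
      have hgron := gronwall_aux (fun t => F 0 (U t) r) (fun t => (3/2) * ‖h t‖)
        ((3/2) * f r) (mul_nonneg (by norm_num) hfr) hgc
        (continuousOn_const.mul hcont.norm)
        (fun t _ => mul_nonneg (by norm_num) (norm_nonneg _))
        hkey s ⟨hs0, hs1⟩
      have hci : (∫ t in (0:ℝ)..s, (3/2) * ‖h t‖) = (3/2) * ∫ t in (0:ℝ)..s, ‖h t‖ :=
        intervalIntegral.integral_const_mul _ _
      rw [hci] at hgron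
      calc F 0 (U s) r
          ≤ (3/2) * f r * s * Real.exp ((3/2) * ∫ t in (0:ℝ)..s, ‖h t‖) := hgron
        _ = 3 * s / 2 * f r * Real.exp ((3/2) * ∫ t in (0:ℝ)..s, ‖h t‖) := by ring
  · have hints : (∫ t in (0:ℝ)..s, ‖h t‖) ≤ M := by
      calc (∫ t in (0:ℝ)..s, ‖h t‖) ≤ ∫ _t in (0:ℝ)..s, M := by
            apply intervalIntegral.integral_mono_on hs0 hnormint intervalIntegrable_const
            intro t ht
            exact hM t ⟨ht.1, ht.2.trans hs1⟩
        _ = s * M := by rw [intervalIntegral.integral_const, smul_eq_mul, sub_zero]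
        _ ≤ M := by nlinarith
    have hexp : Real.exp ((3/2) * ∫ t in (0:ℝ)..s, ‖h t‖) ≤ Real.exp ((3/2) * M) :=
      Real.exp_le_exp.2 (by linarith)
    have h1 : 3 * s / 2 * f r ≤ 3 / 2 * f r := by nlinarith
    have h2 : (0:ℝ) ≤ 3 / 2 * f r := by linarith
    exact mul_le_mul h1 hexp (Real.exp_pos _).le h2
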